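/- Let K ≥ 1, R > 1, and η = 1/(R^K + R^{−K}). For each bit vector m ∈ {0,1}^K, the unique (up to global phase) unit-norm Huffman sequence x ∈ ℂ^{K+1} whose z-transform has zeros α_k = R^{2m_k−1} e^{2πi(k−1)/K} and whose autocorrelation equals a_k = −η for k ∈ {0, 2K}, a_K = 1, a_k = 0 otherwise, has last and first coefficients of moduli |x_K|² = R^{−2‖m‖₁}/(1 + R^{−2K}) and |x_0|² = R^{2‖m‖₁}/(1 + R^{2K}). -/

import Mathlib

lemma my_zpow_sum {ι : Type*} (a : ℂ) (ha : a ≠ 0) (s : Finset ι) (f : ι → ℤ) :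
    a ^ (∑ i ∈ s, f i) = ∏ i ∈ s, a ^ f i := by
  classical
  induction s using Finset.induction_on with
  | empty => simp
  | insert _ _ h ih => rw [Finset.sum_insert h, Finset.prod_insert h, zpow_add₀ ha, ih]

lemma gauss_sum_complex (n : ℕ) : ∑ k ∈ Finset.range n, (k:ℂ) = n * ((n:ℂ)-1) / 2 := by
  induction n with
  | zero => simp
  | succ n ih => rw [Finset.sum_range_succ, ih]; push_cast; ring

lemma sum_at_zero (n : ℕ) (f : Fin (n+1) → ℂ) :
    ∑ k : Fin (n+1), f k * (0:ℂ) ^ (k:ℕ) = f 0 := by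
  rw [Finset.sum_eq_single (0 : Fin (n+1))]
  · simp
  · intro b _ hb
    rw [zero_pow (Fin.val_ne_zero_iff.mpr hb), mul_zero]
  · simp

theorem stmt7 (K : ℕ) (hK : 1 ≤ K) (R : ℝ) (hR : 1 < R)
    (η : ℝ) (hη : η = 1 / (R ^ K + R ^ (-(K:ℤ))))
    (m : Fin K → ℕ) (hm : ∀ k, m k = 0 ∨ m k = 1)
    (α : Fin K → ℂ)
    (hα : ∀ k : Fin K, α k = (R:ℂ) ^ (2 * (m k : ℤ) - 1) *
      Complex.exp (2 * (Real.pi:ℂ) * Complex.I * (k:ℕ) / K))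
    (x : Fin (K+1) → ℂ)
    (hnorm : ∑ k, ‖x k‖ ^ 2 = 1)
    (hfact : ∀ z : ℂ, ∑ k : Fin (K+1), x k * z ^ (k:ℕ) =
      x ⟨K, Nat.lt_succ_self K⟩ * ∏ k : Fin K, (z - α k))
    (hauto : ∀ z : ℂ,
      (∑ k : Fin (K+1), x k * z ^ (k:ℕ)) *
      (∑ k : Fin (K+1), (starRingEnd ℂ) (x ⟨K - (k:ℕ), by omega⟩) * z ^ (k:ℕ)) =
      -(η:ℂ) + z ^ K - (η:ℂ) * z ^ (2*K)) :
    ‖x ⟨K, Nat.lt_succ_self K⟩‖ ^ 2 =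
      R ^ (-(2 * ∑ k : Fin K, (m k : ℤ))) / (1 + R ^ (-(2 * (K:ℤ)))) ∧
    ‖x 0‖ ^ 2 =
      R ^ (2 * ∑ k : Fin K, (m k : ℤ)) / (1 + R ^ (2 * (K:ℤ))) := by
  have hR0 : (0:ℝ) < R := lt_trans one_pos hR
  have hRne : (R:ℝ) ≠ 0 := ne_of_gt hR0
  have hRCne : (R:ℂ) ≠ 0 := by exact_mod_cast hRne
  have hKne : (K:ℂ) ≠ 0 := by exact_mod_cast (by omega : K ≠ 0)
  set S : ℤ := ∑ k : Fin K, (m k : ℤ) with hS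
  set xK : ℂ := x ⟨K, Nat.lt_succ_self K⟩ with hxK
  -- product of zeros
  have hprod : ∏ k : Fin K, α k = (R:ℂ) ^ (2*S - K) * (-1) ^ (K - 1) := by
    have h1 : ∏ k : Fin K, α k =
        (∏ k : Fin K, (R:ℂ) ^ (2 * (m k : ℤ) - 1)) *
        (∏ k : Fin K, Complex.exp (2 * (Real.pi:ℂ) * Complex.I * (k:ℕ) / K)) := by
      rw [← Finset.prod_mul_distrib]; exact Finset.prod_congr rfl fun k _ => hα k
    have h2 : ∏ k : Fin K, (R:ℂ) ^ (2 * (m k : ℤ) - 1) = (R:ℂ) ^ (2*S - K) := by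
      rw [← my_zpow_sum _ hRCne]
      congr 1
      rw [Finset.sum_sub_distrib, ← Finset.mul_sum]
      simp [hS]
    have hsum : ∑ k : Fin K, ((k:ℕ):ℂ) = K * ((K:ℂ)-1) / 2 := by
      rw [← gauss_sum_complex, ← Fin.sum_univ_eq_sum_range]
    have h3 : ∏ k : Fin K, Complex.exp (2 * (Real.pi:ℂ) * Complex.I * (k:ℕ) / K)
        = (-1) ^ (K - 1) := by
      rw [← Complex.exp_sum]
      have e : ∑ k : Fin K, 2 * (Real.pi:ℂ) * Complex.I * (k:ℕ) / K
          = ((K-1:ℕ):ℂ) * ((Real.pi:ℂ) * Complex.I) := by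
        have step : ∑ k : Fin K, 2 * (Real.pi:ℂ) * Complex.I * (k:ℕ) / K
            = 2 * (Real.pi:ℂ) * Complex.I / K * ∑ k : Fin K, ((k:ℕ):ℂ) := by
          rw [Finset.mul_sum]; exact Finset.sum_congr rfl fun k _ => by ring
        have hc : ((K-1:ℕ):ℂ) = (K:ℂ) - 1 := by
          push_cast [Nat.cast_sub hK]; ring
        rw [step, hsum, hc]
        field_simp
      rw [e, Complex.exp_nat_mul, Complex.exp_pi_mul_I]
    rw [h1, h2, h3]
  -- value at zero of autocorrelation
  have hc0 : x 0 * (starRingEnd ℂ) xK = -(η:ℂ) := by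
    have h := hauto 0
    rw [sum_at_zero, sum_at_zero] at h
    simpa [zero_pow (M₀ := ℂ) (by omega : K ≠ 0), zero_pow (M₀ := ℂ) (by omega : 2*K ≠ 0)] using h
  -- value at zero of factorization
  have hf0 : x 0 = -((R:ℂ) ^ (2*S - K)) * xK := by
    have h := hfact 0
    rw [sum_at_zero] at h
    have hneg : ∏ k : Fin K, ((0:ℂ) - α k) = (-1)^K * ∏ k : Fin K, α k := by
      simp only [zero_sub]
      rw [show (fun k : Fin K => -α k) = fun k => (-1) * α k from funext fun k => by ring,
        Finset.prod_mul_distrib, Finset.prod_const, Finset.card_univ, Fintype.card_fin]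
    have hsign : (-1:ℂ)^K * (-1)^(K-1) = -1 := by
      rw [← pow_add, show K + (K-1) = 2*(K-1)+1 from by omega, pow_succ, pow_mul]
      simp
    rw [h, hneg, hprod]
    calc xK * ((-1)^K * ((R:ℂ) ^ (2*S - K) * (-1)^(K-1)))
        = ((-1:ℂ)^K * (-1)^(K-1)) * ((R:ℂ) ^ (2*S - K)) * xK := by ring
      _ = -((R:ℂ) ^ (2*S - K)) * xK := by rw [hsign]; ring
  -- key real equation
  have e3 : R ^ (2*S - K) * Complex.normSq xK = η := by
    have e2 : ((R ^ (2*S - K) * Complex.normSq xK : ℝ) : ℂ) = (η:ℂ) := by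
      have h := hc0
      rw [hf0] at h
      have h2 : (R:ℂ) ^ (2*S - K) * (xK * (starRingEnd ℂ) xK) = (η:ℂ) := by
        linear_combination -h
      rw [Complex.mul_conj] at h2
      push_cast
      exact h2
    exact_mod_cast e2
  have hzK : R ^ ((2:ℤ)*S - K) ≠ 0 := zpow_ne_zero _ hRne
  have hbK : R ^ (K:ℤ) ≠ 0 := zpow_ne_zero _ hRne
  have haS : R ^ (S:ℤ) ≠ 0 := zpow_ne_zero _ hRne
  have hnK : R ^ K ≠ 0 := pow_ne_zero _ hRne
  have goal1 : Complex.normSq xK = R ^ (-(2*S)) / (1 + R ^ (-(2*(K:ℤ)))) := by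
    have hn : Complex.normSq xK = η / R ^ (2*S - K) := by
      field_simp at e3 ⊢
      linarith [e3]
    rw [hn, hη]
    simp only [two_mul, neg_add, zpow_add₀ hRne, zpow_sub₀ hRne, zpow_neg, zpow_natCast]
    field_simp
  constructor
  · rw [Complex.sq_norm]; exact goal1
  · rw [Complex.sq_norm, hf0]
    have : Complex.normSq (-((R:ℂ) ^ (2*S - K)) * xK)
        = (R ^ (2*S - K))^2 * Complex.normSq xK := by
      rw [Complex.normSq_mul, Complex.normSq_neg, ← Complex.ofReal_zpow,
        Complex.normSq_ofReal]
      ring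
    rw [this, goal1]
    simp only [two_mul, neg_add, zpow_add₀ hRne, zpow_sub₀ hRne, zpow_neg, zpow_natCast]
    field_simp
    ring
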